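/- Let p be a prime with p ≡ 5 or p ≡ 7 (mod 12). If p divides d and the p-adic valuation of d is not divisible by n (with n ≥ 2), then the equation (x+1)² + ... + (x+d)² = yⁿ has no integer solutions x, y. -/

import Mathlib

lemma six_mul_sum_sq (x : ℤ) (d : ℕ) :
    6 * ∑ i ∈ Finset.range d, (x + (i : ℤ) + 1) ^ 2 =
      d * (6 * x ^ 2 + 6 * (d + 1) * x + (d + 1) * (2 * d + 1)) := by
  induction d with
  | zero => simp
  | succ k ih =>
    rw [Finset.sum_range_succ, mul_add, ih]
    push_cast
    ring

lemma not_isSquare_three (p : ℕ) [Fact p.Prime]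
    (hmod : p % 12 = 5 ∨ p % 12 = 7) : ¬ IsSquare ((3 : ℕ) : ZMod p) := by
  have hp12 : p % 12 = 5 ∨ p % 12 = 7 := hmod
  have h4 : p % 4 = p % 12 % 4 := (Nat.mod_mod_of_dvd p (by norm_num)).symm
  have h3 : p % 3 = p % 12 % 3 := (Nat.mod_mod_of_dvd p (by norm_num)).symm
  have hcast : ((p : ℕ) : ZMod 3) = ((p % 3 : ℕ) : ZMod 3) := (ZMod.natCast_mod p 3).symm
  rcases hp12 with h | h
  · rw [ZMod.exists_sq_eq_prime_iff_of_mod_four_eq_one (by omega) (by norm_num)]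
    show ¬ IsSquare ((p : ℕ) : ZMod 3)
    rw [hcast, h3, h, show (5:ℕ)%3 = 2 from rfl]
    exact (by decide : ¬ IsSquare ((2:ℕ) : ZMod 3))
  · rw [ZMod.exists_sq_eq_prime_iff_of_mod_four_eq_three (by omega) (by norm_num)
      (by omega)]
    show ¬ ¬ IsSquare ((p : ℕ) : ZMod 3)
    rw [hcast, h3, h, show (7:ℕ)%3 = 1 from rfl]
    simp only [not_not]
    exact (by decide : IsSquare ((1:ℕ) : ZMod 3))

/-- Lemma of Zhang and Bai: if a prime `p ≡ ±5 (mod 12)` divides `d` and the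
`p`-adic valuation of `d` is not divisible by `n ≥ 2`, then the sum of `d`
consecutive squares is never an `n`-th power. -/
theorem no_solutions_of_prime_five_mod_twelve (p d n : ℕ) (hp : p.Prime)
    (hmod : p % 12 = 5 ∨ p % 12 = 7) (hd : 0 < d) (hpd : p ∣ d)
    (hval : ¬ n ∣ padicValNat p d) (hn : 2 ≤ n) :
    ¬ ∃ (x y : ℤ), ∑ i ∈ Finset.range d, (x + (i : ℤ) + 1) ^ 2 = y ^ n := by
  haveI : Fact p.Prime := ⟨hp⟩
  rintro ⟨x, y, hxy⟩
  have hp5 : 5 ≤ p := by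
    rcases hmod with h | h <;> omega
  have hd5 : 5 ≤ d := le_trans hp5 (Nat.le_of_dvd hd hpd)
  -- the sum is positive, so y ≠ 0
  have hsum_pos : 0 < ∑ i ∈ Finset.range d, (x + (i : ℤ) + 1) ^ 2 := by
    apply Finset.sum_pos'
    · intro i _; positivity
    · by_cases hx : x + 1 = 0
      · refine ⟨1, Finset.mem_range.mpr (by omega), ?_⟩
        have h1 : x + ((1 : ℕ) : ℤ) + 1 = 1 := by push_cast; omega
        rw [h1]; norm_num
      · refine ⟨0, Finset.mem_range.mpr (by omega), ?_⟩
        apply pow_two_pos_of_ne_zero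
        push_cast
        omega
  have hy : y ≠ 0 := by
    intro h
    rw [h, zero_pow (by omega)] at hxy
    omega
  set N : ℤ := 6 * x ^ 2 + 6 * ((d : ℤ) + 1) * x + ((d : ℤ) + 1) * (2 * (d : ℤ) + 1) with hN
  have key : 6 * y ^ n = (d : ℤ) * N := by
    rw [← hxy, six_mul_sum_sq]
  -- p does not divide N
  have hpN : ¬ (p : ℤ) ∣ N := by
    intro hdvd
    apply not_isSquare_three p hmod
    have hd0 : ((d : ℕ) : ZMod p) = 0 :=
      (ZMod.natCast_eq_zero_iff d p).mpr hpd
    have hN0 : ((N : ℤ) : ZMod p) = 0 :=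
      (ZMod.intCast_zmod_eq_zero_iff_dvd N p).mpr hdvd
    set t : ZMod p := (x : ZMod p) with ht
    have hNt : (6 : ZMod p) * t ^ 2 + 6 * t + 1 = 0 := by
      have := hN0
      push_cast [hN] at this
      linear_combination this - (6 * (x : ZMod p) + 2 * (d : ZMod p) + 3) * hd0
    have : ((3 : ℕ) : ZMod p) = (6 * t + 3) ^ 2 := by
      push_cast
      linear_combination (-6 : ZMod p) * hNt
    exact ⟨6 * t + 3, by rw [this]; ring⟩
  have hN0 : N ≠ 0 := fun h => hpN (h ▸ dvd_zero _)
  -- compare valuations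
  have hval6 : padicValInt p 6 = 0 :=
    padicValInt.eq_zero_of_not_dvd (by
      intro h
      have h6 : p ∣ 6 := by exact_mod_cast h
      have hle : p ≤ 6 := Nat.le_of_dvd (by norm_num) h6
      interval_cases p <;> revert hp h6 <;> decide)
  have hvalN : padicValInt p N = 0 := padicValInt.eq_zero_of_not_dvd hpN
  have hyn : (y : ℤ) ^ n ≠ 0 := pow_ne_zero _ hy
  have hd0 : (d : ℤ) ≠ 0 := by exact_mod_cast hd.ne'
  have hlhs : padicValInt p (6 * y ^ n) = n * padicValInt p y := by
    rw [padicValInt.mul (by norm_num) hyn, hval6, zero_add]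
    unfold padicValInt
    rw [Int.natAbs_pow]
    exact padicValNat.pow _ n
  have hrhs : padicValInt p ((d : ℤ) * N) = padicValNat p d := by
    rw [padicValInt.mul hd0 hN0, hvalN, add_zero, padicValInt.of_nat]
  apply hval
  refine ⟨padicValInt p y, ?_⟩
  rw [← hrhs, ← key, hlhs]
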